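/- arXiv:2106.13159 — 2 statements merged into one kernel-verified Lean document; each statement's English description precedes it below -/
import Mathlib

section
/- Let P, N, K be positive integers with P dividing N-1, P dividing K-1, and K < N. Let S_{P,N,K} be the numerical semigroup generated by {KN + aN - j : 0 ≤ j ≤ a ≤ P}. Then the genus (number of gaps) of S_{P,N,K} equals (N²K + NK² + N²P + NKP - 3NK - 3NP + P + 1)/(2P). -/
open Finset

lemma sum0 (P : ℕ) (hP : 0 < P) : ∀ c, ∑ i ∈ range P, (c + i)/P = c := by
  intro c
  induction c with
  | zero =>
    apply Finset.sum_eq_zero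
    intro i hi
    simpa using Nat.div_eq_of_lt (mem_range.mp hi)
  | succ c ih =>
    have h1 : ∑ i ∈ range (P+1), (c + i)/P = (∑ i ∈ range P, (c+i)/P) + (c+P)/P :=
      sum_range_succ _ _
    have h2 : ∑ i ∈ range (P+1), (c + i)/P = (∑ i ∈ range P, (c+(i+1))/P) + c/P := by
      simpa using sum_range_succ' (fun k => (c + k)/P) P
    have h3 : ∑ i ∈ range P, (c+(i+1))/P = ∑ i ∈ range P, (c+1+i)/P := by
      apply sum_congr rfl; intro i _
      congr 1
      omega
    have h4 : (c+P)/P = c/P + 1 := Nat.add_div_right c hP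
    omega

lemma sum1 (P : ℕ) (hP : 0 < P) (c : ℕ) :
    ∀ L, 2 * ∑ i ∈ range (L*P), (c + i)/P = 2*L*c + P*L*(L-1) := by
  intro L
  induction L with
  | zero => simp
  | succ L ih =>
    have hsplit : ∑ i ∈ range (L*P + P), (c + i)/P
        = (∑ i ∈ range (L*P), (c + i)/P) + ∑ i ∈ range P, (c + (L*P + i))/P :=
      sum_range_add _ _ _
    have hrange : (L+1)*P = L*P + P := by ring
    rw [hrange, hsplit]
    have hblk : ∑ i ∈ range P, (c + (L*P + i))/P = c + L*P := by
      have := sum0 P hP (c + L*P)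
      rw [← this]
      apply sum_congr rfl; intro i _; congr 1; omega
    rw [hblk]
    have hnl : P*(L+1)*((L+1)-1) = P*L*(L-1) + 2*(L*P) := by
      rcases L with _ | L'
      · simp
      · simp only [Nat.add_sub_cancel]
        ring
    have : 2*(L+1)*c = 2*L*c + 2*c := by ring
    omega


lemma repr_mem (P N K : ℕ) (hN : 0 < N) :
    ∀ t M J n, J + (t+1)*K ≤ M → M ≤ (t+1)*(K+P) → n + J = M*N →
    n ∈ AddSubmonoid.closure {x : ℕ | ∃ a j : ℕ, j ≤ a ∧ a ≤ P ∧ x = K * N + a * N - j} := by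
  intro t
  induction t with
  | zero =>
    intro M J n h1 h2 h3
    norm_num at h1 h2
    set a := M - K with ha
    apply AddSubmonoid.subset_closure
    refine ⟨a, J, by omega, by omega, ?_⟩
    have e1 : M*N = K*N + a*N := by
      rw [← add_mul]; congr 1; omega
    have e2 : a ≤ a*N := Nat.le_mul_of_pos_right a hN
    omega
  | succ t ih =>
    intro M J n h1 h2 h3
    set A := M - (t+1+1)*K with hA
    set a := min A P with ha
    set j := min J a with hj
    have e1 : (t+1+1)*K = (t+1)*K + K := by ring
    have e2 : (t+1+1)*(K+P) = (t+1)*(K+P) + (K+P) := by ring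
    have e3 : (t+1)*(K+P) = (t+1)*K + (t+1)*P := by ring
    set M' := M - (K + a) with hM'
    set J' := J - j with hJ'
    set n' := M'*N - J' with hn'
    have hc1 : J' + (t+1)*K ≤ M' := by omega
    have hc2 : M' ≤ (t+1)*(K+P) := by omega
    have e4 : M' ≤ M'*N := Nat.le_mul_of_pos_right M' hN
    have hc3 : n' + J' = M'*N := by omega
    have hmem' : n' ∈ AddSubmonoid.closure
        {x : ℕ | ∃ a j : ℕ, j ≤ a ∧ a ≤ P ∧ x = K * N + a * N - j} :=
      ih M' J' n' hc1 hc2 hc3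
    have e5 : M*N = (K+a)*N + M'*N := by
      rw [← add_mul]; congr 1; omega
    have e6 : (K+a)*N = K*N + a*N := add_mul _ _ _
    have e7 : a ≤ a*N := Nat.le_mul_of_pos_right a hN
    have hg : (K*N + a*N - j) ∈ {x : ℕ | ∃ a j : ℕ, j ≤ a ∧ a ≤ P ∧ x = K * N + a * N - j} :=
      ⟨a, j, by omega, by omega, rfl⟩
    have hsum : n = (K*N + a*N - j) + n' := by omega
    rw [hsum]
    exact add_mem (AddSubmonoid.subset_closure hg) hmem'

lemma mem_char (P N K : ℕ) (hP : 0 < P) (hN : 0 < N) (hK : 0 < K) (n : ℕ) :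
    n ∈ AddSubmonoid.closure {x : ℕ | ∃ a j : ℕ, j ≤ a ∧ a ≤ P ∧ x = K * N + a * N - j} ↔
    n = 0 ∨ ∃ t M J, 1 ≤ t ∧ J + t*K ≤ M ∧ M ≤ t*(K+P) ∧ n + J = M*N := by
  constructor
  · intro h
    induction h using AddSubmonoid.closure_induction with
    | mem x hx =>
      obtain ⟨a, j, hja, haP, rfl⟩ := hx
      right
      refine ⟨1, K + a, j, le_refl 1, ?_, ?_, ?_⟩
      · omega
      · omega
      · have e6 : (K+a)*N = K*N + a*N := add_mul _ _ _
        have e7 : a ≤ a*N := Nat.le_mul_of_pos_right a hN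
        have e8 : K ≤ K*N := Nat.le_mul_of_pos_right K hN
        omega
    | zero => left; rfl
    | add x y hx hy ihx ihy =>
      rcases ihx with rfl | ⟨t1, M1, J1, h11, h12, h13, h14⟩
      · simpa using ihy
      rcases ihy with rfl | ⟨t2, M2, J2, h21, h22, h23, h24⟩
      · right; exact ⟨t1, M1, J1, h11, h12, h13, by simpa using h14⟩
      right
      refine ⟨t1+t2, M1+M2, J1+J2, by omega, ?_, ?_, ?_⟩
      · have : (t1+t2)*K = t1*K + t2*K := add_mul _ _ _
        omega
      · have : (t1+t2)*(K+P) = t1*(K+P) + t2*(K+P) := add_mul _ _ _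
        omega
      · have : (M1+M2)*N = M1*N + M2*N := add_mul _ _ _
        omega
  · rintro (rfl | ⟨t, M, J, ht, h1, h2, h3⟩)
    · exact zero_mem _
    · obtain ⟨t', rfl⟩ : ∃ t', t = t' + 1 := ⟨t - 1, by omega⟩
      exact repr_mem P N K hN t' M J n h1 h2 h3

theorem stmt_1 (P N K : ℕ) (hP : 0 < P) (hN : 0 < N) (hK : 0 < K)
    (hPN : P ∣ N - 1) (hPK : P ∣ K - 1) (hKN : K < N)
    (S : AddSubmonoid ℕ)
    (hS : S = AddSubmonoid.closure
      {x : ℕ | ∃ a j : ℕ, j ≤ a ∧ a ≤ P ∧ x = K * N + a * N - j}) :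
    (({n : ℕ | n ∉ S}).ncard : ℚ) =
      ((N : ℚ) ^ 2 * K + N * K ^ 2 + N ^ 2 * P + N * K * P - 3 * N * K
        - 3 * N * P + P + 1) / (2 * P) := by
  obtain ⟨L, hL⟩ := hPN
  obtain ⟨Q, hQn⟩ := hPK
  have hN2 : 2 ≤ N := by omega
  have hL1 : 1 ≤ L := by
    rcases Nat.eq_zero_or_pos L with h | h
    · subst h; simp at hL; omega
    · exact h
  obtain ⟨L', rfl⟩ : ∃ L', L = L' + 1 := ⟨L - 1, by omega⟩
  have hNL : N = (L' + 1) * P + 1 := by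
    have : P * (L' + 1) = (L' + 1) * P := mul_comm _ _
    omega
  have hKQ : K = P * Q + 1 := by omega
  have hmemS : ∀ n : ℕ, n ∈ S ↔
      (n = 0 ∨ ∃ t M J, 1 ≤ t ∧ J + t*K ≤ M ∧ M ≤ t*(K+P) ∧ n + J = M*N) := by
    intro n; rw [hS]; exact mem_char P N K hP hN hK n
  set T0 := N + K + P with hT0
  set F : Finset ((ℕ × ℕ) × ℕ) :=
    ((range (K+P) ×ˢ range N) ×ˢ Icc 1 T0).filter
      (fun x => x.2 * P + 1 ≤ x.1.1 + x.1.2) with hF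
  set φ : (ℕ × ℕ) × ℕ → ℕ := fun x => (x.2 * (K+P) - x.1.1) * N - x.1.2 with hφ
  have hFmem : ∀ s j t : ℕ, ((s, j), t) ∈ F ↔
      (s < K + P ∧ j < N ∧ 1 ≤ t ∧ t ≤ T0 ∧ t * P + 1 ≤ s + j) := by
    intro s j t
    simp [hF, Finset.mem_filter, Finset.mem_product, Finset.mem_range, Finset.mem_Icc]
    tauto
  -- KEY: gap set equals φ '' F
  have key : ∀ n : ℕ, n ∉ S ↔ ∃ x ∈ F, φ x = n := by
    intro n
    constructor
    · intro hn
      have hn0 : n ≠ 0 := by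
        rintro rfl; exact hn ((hmemS 0).2 (Or.inl rfl))
      obtain ⟨d, r, hdr, hrN⟩ : ∃ d r, n - 1 = N * d + r ∧ r < N :=
        ⟨(n-1)/N, (n-1) % N, (Nat.div_add_mod _ _).symm, Nat.mod_lt _ (by omega)⟩
      obtain ⟨m, hm⟩ : ∃ m, m = d + 1 := ⟨_, rfl⟩
      obtain ⟨j, hj⟩ : ∃ j, j = N - 1 - r := ⟨_, rfl⟩
      have hbm : m * N = N * d + N := by rw [hm]; ring
      have hmn : n + j = m * N := by omega
      have hjN : j < N := by omega
      have hm1 : 1 ≤ m := by omega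
      obtain ⟨d2, r2, hdr2, hr2⟩ : ∃ d2 r2, m - 1 = (K+P) * d2 + r2 ∧ r2 < K+P :=
        ⟨(m-1)/(K+P), (m-1) % (K+P), (Nat.div_add_mod _ _).symm, Nat.mod_lt _ (by omega)⟩
      obtain ⟨t0, ht0⟩ : ∃ t0, t0 = d2 + 1 := ⟨_, rfl⟩
      have hbt : t0 * (K+P) = (K+P) * d2 + (K+P) := by rw [ht0]; ring
      obtain ⟨s, hs⟩ : ∃ s, s = t0 * (K+P) - m := ⟨_, rfl⟩
      have hts : m + s = t0 * (K+P) := by omega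
      have hsKP : s < K + P := by omega
      have hcond : t0 * P + 1 ≤ s + j := by
        by_contra hc
        apply hn
        rw [hmemS]
        right
        refine ⟨t0, m, j, by omega, ?_, by omega, hmn⟩
        have e3 : t0*(K+P) = t0*K + t0*P := by ring
        omega
      have ht0T : t0 ≤ T0 := by
        have : t0 ≤ t0 * P := Nat.le_mul_of_pos_right _ hP
        omega
      refine ⟨((s, j), t0), (hFmem s j t0).2 ⟨hsKP, hjN, by omega, ht0T, hcond⟩, ?_⟩
      show (t0 * (K+P) - s) * N - j = n
      have hms : t0 * (K+P) - s = m := by omega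
      rw [hms]; omega
    · rintro ⟨⟨⟨s, j⟩, t⟩, hxF, rfl⟩
      rw [hFmem] at hxF
      obtain ⟨hsP, hjN, ht1, htT, hcond⟩ := hxF
      show (t * (K+P) - s) * N - j ∉ S
      obtain ⟨m, hm⟩ : ∃ m, m = t * (K+P) - s := ⟨_, rfl⟩
      rw [← hm]
      have hKPt : K + P ≤ t * (K+P) := Nat.le_mul_of_pos_left _ ht1
      have hm1 : 1 ≤ m := by omega
      have hNm : N ≤ m * N := Nat.le_mul_of_pos_left _ hm1
      intro hmem
      rw [hmemS] at hmem
      rcases hmem with h0 | ⟨t', M, J, ht', h1, h2, h3⟩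
      · omega
      · rcases Nat.lt_or_ge M m with hMm | hMm
        · have hB : M * N + N ≤ m * N := by
            have h5 : (M+1) * N ≤ m * N := Nat.mul_le_mul_right N (by omega)
            have h6 : (M+1) * N = M*N + N := by ring
            omega
          omega
        · have hJ : J = j + (M-m)*N := by
            have : m*N + (M-m)*N = M*N := by rw [← add_mul]; congr 1; omega
            omega
          have hD : M - m ≤ (M-m)*N := Nat.le_mul_of_pos_right _ (by omega)
          have hjm : j + t'*K ≤ m := by omega
          have e3 : t*(K+P) = t*K + t*P := by ring
          rcases Nat.lt_or_ge t' t with htt | htt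
          · have hB : t'*(K+P) + (K+P) ≤ t*(K+P) := by
              have h5 : (t'+1)*(K+P) ≤ t*(K+P) := Nat.mul_le_mul_right _ (by omega)
              have h6 : (t'+1)*(K+P) = t'*(K+P) + (K+P) := by ring
              omega
            omega
          · have hB : t*K ≤ t'*K := Nat.mul_le_mul_right K htt
            omega
  -- injectivity
  have hinj : Set.InjOn φ ↑F := by
    rintro ⟨⟨s1, j1⟩, t1⟩ hx ⟨⟨s2, j2⟩, t2⟩ hy heq
    rw [Finset.mem_coe, hFmem] at hx hy
    obtain ⟨hs1, hj1, ht1, _, hc1⟩ := hx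
    obtain ⟨hs2, hj2, ht2, _, hc2⟩ := hy
    simp only [hφ] at heq
    have hKPt1 : K + P ≤ t1 * (K+P) := Nat.le_mul_of_pos_left _ ht1
    have hKPt2 : K + P ≤ t2 * (K+P) := Nat.le_mul_of_pos_left _ ht2
    obtain ⟨m1, hm1⟩ : ∃ m, t1 * (K+P) - s1 = m := ⟨_, rfl⟩
    obtain ⟨m2, hm2⟩ : ∃ m, t2 * (K+P) - s2 = m := ⟨_, rfl⟩
    rw [hm1, hm2] at heq
    have hN1 : N ≤ m1 * N := Nat.le_mul_of_pos_left _ (by omega)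
    have hN2' : N ≤ m2 * N := Nat.le_mul_of_pos_left _ (by omega)
    have hmm : m1 = m2 := by
      rcases Nat.lt_trichotomy m1 m2 with h | h | h
      · have h5 : (m1+1)*N ≤ m2*N := Nat.mul_le_mul_right N (by omega)
        have h6 : (m1+1)*N = m1*N + N := by ring
        omega
      · exact h
      · have h5 : (m2+1)*N ≤ m1*N := Nat.mul_le_mul_right N (by omega)
        have h6 : (m2+1)*N = m2*N + N := by ring
        omega
    have hjj : j1 = j2 := by
      rw [hmm] at heq hN1
      omega
    have htt : t1 = t2 := by
      rcases Nat.lt_trichotomy t1 t2 with h | h | h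
      · have h5 : (t1+1)*(K+P) ≤ t2*(K+P) := Nat.mul_le_mul_right _ (by omega)
        have h6 : (t1+1)*(K+P) = t1*(K+P) + (K+P) := by ring
        omega
      · exact h
      · have h5 : (t2+1)*(K+P) ≤ t1*(K+P) := Nat.mul_le_mul_right _ (by omega)
        have h6 : (t2+1)*(K+P) = t2*(K+P) + (K+P) := by ring
        omega
    have hss : s1 = s2 := by
      rw [htt] at hm1
      omega
    simp [hss, hjj, htt]
  -- cardinality
  have hset : {n : ℕ | n ∉ S} = φ '' ↑F := by
    ext n
    simp only [Set.mem_setOf_eq, Set.mem_image, Finset.mem_coe]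
    rw [key n]
  have hcard : ({n : ℕ | n ∉ S}).ncard = F.card := by
    rw [hset, Set.ncard_image_of_injOn hinj, Set.ncard_coe_finset]
  -- counting
  have hdiv_count : ∀ s ∈ range (K+P), ∀ j ∈ range N,
      (∑ t ∈ Icc 1 T0, if t * P + 1 ≤ s + j then (1:ℕ) else 0) = (s + j - 1)/P := by
    intro s hs j hj
    rw [Finset.mem_range] at hs hj
    rw [← Finset.card_filter]
    have hfil : (Icc 1 T0).filter (fun t => t * P + 1 ≤ s + j) = Icc 1 ((s+j-1)/P) := by
      ext t
      simp only [Finset.mem_filter, Finset.mem_Icc]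
      have hdiv : t ≤ (s+j-1)/P ↔ t*P ≤ s+j-1 := Nat.le_div_iff_mul_le hP
      have htP : t ≤ t*P := Nat.le_mul_of_pos_right _ hP
      constructor
      · rintro ⟨⟨h1, h2⟩, h3⟩
        exact ⟨h1, hdiv.2 (by omega)⟩
      · rintro ⟨h1, h2⟩
        have h4 := hdiv.1 h2
        exact ⟨⟨h1, by omega⟩, by omega⟩
    rw [hfil, Nat.card_Icc]
    exact Nat.add_sub_cancel _ _
  have hFcard : F.card = ∑ s ∈ range (K+P), ∑ j ∈ range N, (s + j - 1)/P := by
    rw [hF, Finset.card_filter, Finset.sum_product, Finset.sum_product]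
    exact Finset.sum_congr rfl (fun s hs => Finset.sum_congr rfl (fun j hj => hdiv_count s hs j hj))
  have hinner : ∀ s, ∑ j ∈ range N, (s + j - 1)/P
      = (∑ i ∈ range ((L'+1)*P), (s + i)/P) + (s - 1)/P := by
    intro s
    rw [hNL, Finset.sum_range_succ']
    congr 1
  have hsum1 : ∀ s, 2 * ∑ i ∈ range ((L'+1)*P), (s + i)/P = 2*(L'+1)*s + P*(L'+1)*L' := by
    intro s
    simpa using sum1 P hP s (L'+1)
  have hKP1 : K + P - 1 = P*Q + P := by omega
  have hgauss : (∑ s ∈ range (K+P), s) * 2 = (K+P)*(P*Q+P) := by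
    rw [← hKP1]
    exact Finset.sum_range_id_mul_two _
  have hlast : 2 * ∑ s ∈ range (K+P), (s - 1)/P = P*(Q+1)*Q := by
    have hKP : K + P = (Q+1)*P + 1 := by
      have h6 : P*Q = Q*P := mul_comm _ _
      have h7 : (Q+1)*P = Q*P + P := by ring
      omega
    rw [hKP, Finset.sum_range_succ']
    have e1 : ∑ i ∈ range ((Q+1)*P), (i + 1 - 1)/P = ∑ i ∈ range ((Q+1)*P), i/P :=
      Finset.sum_congr rfl (fun i _ => rfl)
    rw [e1]
    have h0 : (0 - 1)/P = 0 := by norm_num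
    have h5 := sum1 P hP 0 (Q+1)
    simp only [Nat.add_sub_cancel, mul_zero, zero_add] at h5
    omega
  obtain ⟨A, hA⟩ : ∃ a, ∑ s ∈ range (K+P), ∑ i ∈ range ((L'+1)*P), (s + i)/P = a := ⟨_, rfl⟩
  obtain ⟨B, hB⟩ : ∃ b, ∑ s ∈ range (K+P), (s - 1)/P = b := ⟨_, rfl⟩
  obtain ⟨X, hX⟩ : ∃ x, ∑ s ∈ range (K+P), s = x := ⟨_, rfl⟩
  rw [hB] at hlast
  rw [hX] at hgauss
  have hFAB : F.card = A + B := by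
    rw [hFcard]
    calc ∑ s ∈ range (K+P), ∑ j ∈ range N, (s + j - 1)/P
        = ∑ s ∈ range (K+P), ((∑ i ∈ range ((L'+1)*P), (s + i)/P) + (s - 1)/P) :=
          Finset.sum_congr rfl (fun s _ => hinner s)
      _ = (∑ s ∈ range (K+P), ∑ i ∈ range ((L'+1)*P), (s + i)/P)
            + ∑ s ∈ range (K+P), (s - 1)/P := Finset.sum_add_distrib
      _ = A + B := by rw [hA, hB]
  have e2 : 2 * A = 2*(L'+1)*X + (K+P)*(P*(L'+1)*L') := by
    calc 2 * A = ∑ s ∈ range (K+P), 2 * ∑ i ∈ range ((L'+1)*P), (s + i)/P := by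
          rw [← hA]; exact Finset.mul_sum _ _ _
      _ = ∑ s ∈ range (K+P), (2*(L'+1)*s + P*(L'+1)*L') :=
          Finset.sum_congr rfl (fun s _ => hsum1 s)
      _ = (∑ s ∈ range (K+P), 2*(L'+1)*s) + (K+P)*(P*(L'+1)*L') := by
          rw [Finset.sum_add_distrib, Finset.sum_const, Finset.card_range, smul_eq_mul]
      _ = 2*(L'+1)*X + (K+P)*(P*(L'+1)*L') := by
          rw [← Finset.mul_sum, hX]
  -- cast to ℚ
  have h2P0 : (2*(P:ℚ)) ≠ 0 := by positivity
  have c1 : ((F.card : ℕ):ℚ) = (A:ℚ) + (B:ℚ) := by exact_mod_cast hFAB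
  have c2 : 2*(A:ℚ) = 2*((L':ℚ)+1)*(X:ℚ) + ((K:ℚ)+(P:ℚ))*((P:ℚ)*((L':ℚ)+1)*(L':ℚ)) := by
    exact_mod_cast e2
  have c3 : 2*(B:ℚ) = (P:ℚ)*((Q:ℚ)+1)*(Q:ℚ) := by exact_mod_cast hlast
  have c4 : (X:ℚ)*2 = ((K:ℚ)+(P:ℚ))*((P:ℚ)*(Q:ℚ)+(P:ℚ)) := by exact_mod_cast hgauss
  have hNQ : (N:ℚ) = ((L':ℚ)+1)*(P:ℚ) + 1 := by rw [hNL]; push_cast; ring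
  have hKQQ : (K:ℚ) = (P:ℚ)*(Q:ℚ) + 1 := by rw [hKQ]; push_cast; ring
  rw [hcard, eq_div_iff h2P0, hNQ, hKQQ]
  rw [hKQQ] at c2 c4
  linear_combination (2*(P:ℚ))*c1 + (P:ℚ)*c2 + (P:ℚ)*c3 + ((L':ℚ)+1)*(P:ℚ)*c4
end

section
/- Let p be prime, q = (p^b)^r with r ≥ 2, N = (q³+1)/(q+1), K = q+1-p^b, P = p^b. Then the conductor of the numerical semigroup S = ⟨q³+1-iN-j : 0 ≤ i+j ≤ p^b⟩ equals (q⁵ - 2q³p^b + q²p^{2b} - q²p^b - qp^{2b} + q² + qp^b + p^{2b} - p^b)/p^b. -/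
private lemma gen_mem' (q N P : ℕ)
    (hqN : (q+1)*N = q^3+1)
    (S : AddSubmonoid ℕ)
    (hS : S = AddSubmonoid.closure {x : ℕ | ∃ i j : ℕ, i + j ≤ P ∧ x = q ^ 3 + 1 - i * N - j})
    (a j g : ℕ) (ha2 : a ≤ q + 1) (hj : j + (q+1) ≤ a + P)
    (hg : g + j = a * N) : g ∈ S := by
  subst hS
  apply AddSubmonoid.subset_closure
  refine ⟨q + 1 - a, j, by omega, ?_⟩
  have e : (q+1-a)*N + a*N = (q+1)*N := by
    rw [← Nat.add_mul]; congr 1; omega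
  omega

private lemma mem_char_s3 (q N P K : ℕ) (hq2 : 2 ≤ q) (hPq : P ≤ q) (hP1 : 1 ≤ P)
    (hK : K + P = q + 1)
    (hqN : (q+1)*N = q^3+1)
    (S : AddSubmonoid ℕ)
    (hS : S = AddSubmonoid.closure {x : ℕ | ∃ i j : ℕ, i + j ≤ P ∧ x = q ^ 3 + 1 - i * N - j})
    (n : ℕ) :
    n ∈ S ↔ ∃ m A J : ℕ, A ≤ m*(q+1) ∧ J + m*K ≤ A ∧ n + J = A*N := by
  have hNq : q + 1 ≤ N := by
    rcases Nat.lt_or_ge N (q+1) with h | h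
    · exfalso
      have : (q+1)*N ≤ (q+1)*q := Nat.mul_le_mul_left _ (by omega)
      have h2 : (q+1)*q ≤ q*q*q := by nlinarith
      have h3 : q*q*q = q^3 := by ring
      omega
    · exact h
  constructor
  · intro h
    rw [hS] at h
    induction h using AddSubmonoid.closure_induction with
    | mem x hx =>
      obtain ⟨i, j, hij, hx⟩ := hx
      refine ⟨1, q + 1 - i, j, by omega, by omega, ?_⟩
      have e : (q+1-i)*N + i*N = (q+1)*N := by
        rw [← Nat.add_mul]; congr 1; omega
      have e2 : i*N ≤ q*N := Nat.mul_le_mul_right _ (by omega)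
      have e3 : q*N + N = (q+1)*N := by ring
      omega
    | zero => exact ⟨0, 0, 0, by omega, by omega, by omega⟩
    | add x y _ _ ihx ihy =>
      obtain ⟨m1, A1, J1, a1, b1, c1⟩ := ihx
      obtain ⟨m2, A2, J2, a2, b2, c2⟩ := ihy
      have e1 : (m1+m2)*(q+1) = m1*(q+1) + m2*(q+1) := by ring
      have e2 : (A1+A2)*N = A1*N + A2*N := by ring
      have e3 : (m1+m2)*K = m1*K + m2*K := by ring
      exact ⟨m1 + m2, A1 + A2, J1 + J2, by omega, by omega, by omega⟩
  · rintro ⟨m, A, J, h1, h2, h3⟩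
    induction m generalizing A J n with
    | zero =>
      have hA0 : A = 0 := by simpa using h1
      subst hA0
      simp at h3
      have : n = 0 := by omega
      rw [this]; exact zero_mem S
    | succ m ih =>
      have hsm : (m+1)*(q+1) = m*(q+1) + (q+1) := by ring
      have hsk : (m+1)*K = m*K + K := by ring
      have hPKN : P ≤ K*N := le_trans (by omega) (Nat.le_mul_of_pos_left _ (by omega))
      have hassoc : m*(K*N) = m*K*N := by ring
      have hmP : m*P ≤ m*(K*N) := Nat.mul_le_mul_left m hPKN
      have hmqk : m*(q+1) = m*K + m*P := by rw [← hK]; ring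
      have hNle : N ≤ (q+1)*N := Nat.le_mul_of_pos_left _ (by omega)
      rcases le_or_gt (q + 1 + m * K) A with hc | hc
      · -- use generator with a = q+1
        have hAN : A*N = (A - (q+1))*N + (q+1)*N := by
          rw [← Nat.add_mul]; congr 1; omega
        have hmKN : m*K ≤ m*K*N := Nat.le_mul_of_pos_right _ (by omega)
        have hA'N : m*K*N ≤ (A - (q+1))*N := Nat.mul_le_mul_right _ (by omega)
        rcases Nat.le_total P J with hPJ | hPJ
        · -- j = P
          have hgen : ((q+1)*N - P) ∈ S := by
            refine gen_mem' q N P hqN S hS (q+1) P ((q+1)*N - P) le_rfl (by omega) (by omega)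
          have hrest : (n - ((q+1)*N - P)) ∈ S := by
            exact ih (n - ((q+1)*N - P)) (A - (q+1)) (J - P) (by omega) (by omega) (by omega)
          have : n = ((q+1)*N - P) + (n - ((q+1)*N - P)) := by omega
          rw [this]; exact add_mem hgen hrest
        · -- j = J ≤ P
          have hgen : ((q+1)*N - J) ∈ S := by
            refine gen_mem' q N P hqN S hS (q+1) J ((q+1)*N - J) le_rfl (by omega) (by omega)
          have hrest : (n - ((q+1)*N - J)) ∈ S := by
            exact ih (n - ((q+1)*N - J)) (A - (q+1)) 0 (by omega) (by omega) (by omega)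
          have : n = ((q+1)*N - J) + (n - ((q+1)*N - J)) := by omega
          rw [this]; exact add_mem hgen hrest
      · -- a = A - m*K, j = J, rest = m*K copies
        have hJP : J + K < q + 1 := by omega
        have haN : A*N = (A - m*K)*N + m*K*N := by
          rw [← Nat.add_mul]; congr 1; omega
        have haq : (A - m*K)*N ≤ (q+1)*N := Nat.mul_le_mul_right _ (by omega)
        have hmKN : (m+1)*K*N ≤ A*N := Nat.mul_le_mul_right _ (by omega)
        have hexp : (m+1)*K*N = m*K*N + K*N := by ring
        have hgen : (n - m*K*N) ∈ S := by
          refine gen_mem' q N P hqN S hS (A - m*K) J (n - m*K*N) (by omega) (by omega) ?_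
          omega
        have hrest : (m*K*N) ∈ S := by
          exact ih (m*K*N) (m*K) 0 (Nat.mul_le_mul_left m (by omega)) (by omega) (by omega)
        have : n = (n - m*K*N) + m*K*N := by omega
        rw [this]; exact add_mem hgen hrest

private lemma cover' (q P K N mstar Astar : ℕ) (hP2 : 2 ≤ P) (hPq : P + 1 ≤ q)
    (hK : K + P = q + 1)
    (hN2 : N + q = q*q + 1)
    (hmP : mstar*P + P = q*q)
    (hA : Astar + 2 = mstar*K + N)
    (A : ℕ) (hAge : Astar + 1 ≤ A) :
    ∃ m, m*K + N ≤ A + 1 ∧ A ≤ m*(q+1) := by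
  have hdm := Nat.div_add_mod (A+q) (q+1)
  have hmod : (A+q) % (q+1) < q+1 := Nat.mod_lt _ (by omega)
  set m := (A+q)/(q+1) with hmdef
  have hcomm : (q+1)*m = m*(q+1) := Nat.mul_comm _ _
  have emK : mstar*(q+1) = mstar*K + mstar*P := by rw [← hK]; ring
  refine ⟨m, ?_, by omega⟩
  rcases lt_or_ge m mstar with hlt | hge
  · exfalso
    have hmono : (m+1)*(q+1) ≤ mstar*(q+1) := Nat.mul_le_mul_right _ (by omega)
    have e1 : (m+1)*(q+1) = m*(q+1) + (q+1) := by ring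
    omega
  · rcases eq_or_lt_of_le hge with heq | hlt
    · subst heq; omega
    · have hmono : (mstar+1)*P ≤ m*P := Nat.mul_le_mul_right _ (by omega)
      have e3 : (mstar+1)*P = mstar*P + P := by ring
      have e4 : m*(q+1) = m*K + m*P := by rw [← hK]; ring
      omega

theorem stmt_3 (p b r : ℕ) (hp : p.Prime) (hb : 0 < b) (hr : 2 ≤ r)
    (q N : ℕ) (hq : q = (p ^ b) ^ r) (hN : N = (q ^ 3 + 1) / (q + 1))
    (S : AddSubmonoid ℕ)
    (hS : S = AddSubmonoid.closure
      {x : ℕ | ∃ i j : ℕ, i + j ≤ p ^ b ∧ x = q ^ 3 + 1 - i * N - j}) :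
    ∃ C : ℕ, IsLeast {c : ℕ | ∀ n : ℕ, c ≤ n → n ∈ S} C ∧
      (C : ℚ) = ((q : ℚ) ^ 5 - 2 * q ^ 3 * p ^ b + q ^ 2 * p ^ (2 * b)
        - q ^ 2 * p ^ b - q * p ^ (2 * b) + q ^ 2 + q * p ^ b
        + p ^ (2 * b) - p ^ b) / p ^ b := by
  obtain ⟨r', rfl⟩ : ∃ r', r = r' + 2 := ⟨r - 2, by omega⟩
  obtain ⟨P, hPdef⟩ : ∃ P : ℕ, p ^ b = P := ⟨_, rfl⟩
  rw [hPdef] at hS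
  have hP2 : 2 ≤ P := by
    have h1 : p ^ 1 ≤ p ^ b := Nat.pow_le_pow_right hp.pos hb
    have h2 : 2 ≤ p := hp.two_le
    simp only [pow_one] at h1
    omega
  obtain ⟨Q, hq', hQP⟩ : ∃ Q, q = P * Q ∧ P ≤ Q :=
    ⟨P ^ (r' + 1), by rw [hq, ← hPdef]; ring, Nat.le_self_pow (by omega) P⟩
  have hqPP : P * P ≤ q := by rw [hq']; exact Nat.mul_le_mul_left P hQP
  have hPq : P + 1 ≤ q := by nlinarith
  have hq2 : 2 ≤ q := by omega
  -- N = q^2 - q + 1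
  have hNval : (q+1)*(q*q+1-q) = q^3+1 := by
    have h : q ≤ q*q+1 := by nlinarith
    zify [h]; ring
  have hNeq : N = q*q+1-q := by
    rw [hN, ← hNval, Nat.mul_div_cancel_left _ (by omega : 0 < q+1)]
  have hqq : q ≤ q*q := Nat.le_mul_of_pos_left _ (by omega)
  have hN2 : N + q = q*q + 1 := by omega
  have hqN : (q+1)*N = q^3+1 := by rw [hNeq]; exact hNval
  have hNP : P + 1 ≤ N := by nlinarith
  -- K, mstar, Astar, C
  obtain ⟨K, hK⟩ : ∃ K, K + P = q + 1 := ⟨q + 1 - P, by omega⟩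
  have hQ1 : 0 < q*Q := Nat.mul_pos (by omega) (by omega)
  obtain ⟨mstar, hmstar⟩ : ∃ mstar, mstar + 1 = q*Q := ⟨q*Q - 1, by omega⟩
  have hmP : mstar*P + P = q*q := by
    have e : (mstar+1)*P = q*q := by rw [hmstar, hq']; ring
    have e2 : (mstar+1)*P = mstar*P + P := by ring
    omega
  have hm1 : 1 ≤ mstar := by nlinarith
  have hK1 : 1 ≤ K := by omega
  have hmK1 : 1*1 ≤ mstar*K := Nat.mul_le_mul hm1 hK1
  obtain ⟨Astar, hA⟩ : ∃ Astar, Astar + 2 = mstar*K + N := ⟨mstar*K + N - 2, by omega⟩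
  have hAstar1 : 1 ≤ Astar := by omega
  have hAN : N ≤ Astar*N := Nat.le_mul_of_pos_left _ (by omega)
  obtain ⟨C, hC⟩ : ∃ C, C + N = Astar*N + 2 := ⟨Astar*N - (N - 2), by omega⟩
  have emK : mstar*(q+1) = mstar*K + mstar*P := by rw [← hK]; ring
  -- membership characterization
  have hmem : ∀ n : ℕ, n ∈ S ↔ ∃ m A J : ℕ, A ≤ m*(q+1) ∧ J + m*K ≤ A ∧ n + J = A*N :=
    mem_char_s3 q N P K hq2 (by omega) (by omega) hK hqN S hS
  -- upper part : everything ≥ C is in S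
  have hupper : ∀ n : ℕ, C ≤ n → n ∈ S := by
    intro n hn
    rcases le_or_gt n (Astar*N) with hle | hlt
    · exact (hmem n).2 ⟨mstar, Astar, Astar*N - n, by omega, by omega, by omega⟩
    · have hdm := Nat.div_add_mod n N
      have hmod : n % N < N := Nat.mod_lt _ (by omega)
      obtain ⟨A, J, hAge, hJle, heq⟩ :
          ∃ A J : ℕ, Astar + 1 ≤ A ∧ J + 1 ≤ N ∧ n + J = A*N := by
        by_cases hv : n % N = 0
        · refine ⟨n / N, 0, ?_, by omega, ?_⟩
          · have h0 : (n/N)*N = n := by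
              have : N*(n/N) = (n/N)*N := by ring
              omega
            have h1 : Astar*N < (n/N)*N := by omega
            have := Nat.lt_of_mul_lt_mul_right h1
            omega
          · have : N*(n/N) = (n/N)*N := by ring
            omega
        · refine ⟨n / N + 1, N - n % N, ?_, by omega, ?_⟩
          · have h1 : (n/N+1)*N = N*(n/N) + N := by ring
            have h2 : Astar*N < (n/N+1)*N := by omega
            have := Nat.lt_of_mul_lt_mul_right h2
            omega
          · have h1 : (n/N+1)*N = N*(n/N) + N := by ring
            omega
      obtain ⟨m, hc1, hc2⟩ := cover' q P K N mstar Astar hP2 hPq hK hN2 hmP hA A hAge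
      exact (hmem n).2 ⟨m, A, J, hc2, by omega, heq⟩
  -- C - 1 is not in S
  have hFnot : (C - 1) ∉ S := by
    rw [hmem]
    rintro ⟨m, A, J, h1, h2, h3⟩
    clear hmem hupper hS hNeq hNval hN hq hPdef hp S
    have hAgeA : Astar ≤ A := by
      by_contra hcon
      have h4 : (A+1)*N ≤ Astar*N := Nat.mul_le_mul_right _ (by omega)
      have e : (A+1)*N = A*N + N := by ring
      omega
    rcases eq_or_lt_of_le hAgeA with heqA | hltA
    · -- A = Astar
      rw [← heqA] at h1 h2 h3
      have hJ : J = N - 1 := by omega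
      rcases le_or_gt mstar m with hge | hlt
      · have : mstar*K ≤ m*K := Nat.mul_le_mul_right _ hge
        omega
      · have hmono : (m+1)*(q+1) ≤ mstar*(q+1) := Nat.mul_le_mul_right _ (by omega)
        have e1 : (m+1)*(q+1) = m*(q+1) + (q+1) := by ring
        omega
    · -- A ≥ Astar + 1
      obtain ⟨t, hAt⟩ : ∃ t, A = Astar + 1 + t := ⟨A - Astar - 1, by omega⟩
      have hkey : (q+1)*J ≤ A*P := by
        have c1 : (q+1)*(J + m*K) ≤ (q+1)*A := Nat.mul_le_mul_left _ h2
        have c2 : A*K ≤ (m*(q+1))*K := Nat.mul_le_mul_right _ h1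
        have c3 : (q+1)*(J + m*K) = (q+1)*J + (m*(q+1))*K := by ring
        have c4 : (q+1)*A = A*K + A*P := by rw [← hK]; ring
        omega
      have eAN : A*N = Astar*N + N + t*N := by rw [hAt]; ring
      have hJval : J + 1 = 2*N + t*N := by omega
      -- to ℤ
      exfalso
      have zq2 : (2:ℤ) ≤ (q:ℤ) := by exact_mod_cast hq2
      have zP2 : (2:ℤ) ≤ (P:ℤ) := by exact_mod_cast hP2
      have zPq : (P:ℤ) + 1 ≤ (q:ℤ) := by exact_mod_cast hPq
      have zt : (0:ℤ) ≤ (t:ℤ) := Int.natCast_nonneg t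
      have hNz : (N:ℤ) + q = q*q + 1 := by exact_mod_cast hN2
      have hKz : (K:ℤ) + P = q + 1 := by exact_mod_cast hK
      have h3z : (mstar:ℤ)*P + P = q*q := by exact_mod_cast hmP
      have h4z : (Astar:ℤ) + 2 = mstar*K + N := by exact_mod_cast hA
      have h5z : (A:ℤ) = Astar + 1 + t := by exact_mod_cast hAt
      have h6z : (J:ℤ) + 1 = 2*N + t*N := by exact_mod_cast hJval
      have zkeyz : ((q:ℤ)+1)*J ≤ (A:ℤ)*P := by exact_mod_cast hkey
      have zAstarP : (Astar:ℤ)*P = q*q*q + q*q - 2*q*P + P*P - 2*P := by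
        linear_combination (P:ℤ)*h4z + (K:ℤ)*h3z + ((q:ℤ)*q - P)*hKz + (P:ℤ)*hNz
      have zJ : (J:ℤ) = ((t:ℤ)+2)*((q:ℤ)*q - q + 1) - 1 := by
        linear_combination h6z + ((t:ℤ)+2)*hNz
      have zAP : (A:ℤ)*P = (q:ℤ)*q*q + q*q - 2*q*P + P*P - P + t*P := by
        linear_combination (P:ℤ)*h5z + zAstarP
      rw [zJ, zAP] at zkeyz
      have zqq : (1:ℤ)*1 ≤ (q:ℤ)*q :=
        mul_le_mul (by linarith only [zq2]) (by linarith only [zq2]) (by norm_num)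
          (by linarith only [zq2])
      have zqqq : (1:ℤ)*(q:ℤ) ≤ ((q:ℤ)*q)*q :=
        mul_le_mul (by linarith only [zqq]) le_rfl (by linarith only [zq2])
          (by linarith only [zqq])
      have H1 : (0:ℤ) ≤ (t:ℤ) * ((q:ℤ)*q*q + 1 - P) :=
        mul_nonneg zt (by linarith only [zqqq, zPq, zq2])
      have H2 : (0:ℤ) ≤ ((q:ℤ) - 1) * ((q:ℤ)*q - 1) :=
        mul_nonneg (by linarith only [zq2]) (by linarith only [zqq])
      have H3 : (0:ℤ) < (P:ℤ) * (2*(q:ℤ) + 1 - P) :=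
        mul_pos (by linarith only [zP2]) (by linarith only [zPq, zq2])
      linarith only [zkeyz, H1, H2, H3]
  -- assemble
  have hC2 : 2 ≤ C := by omega
  refine ⟨C, ⟨hupper, ?_⟩, ?_⟩
  · intro c hc
    by_contra hcon
    exact hFnot (hc (C - 1) (by omega))
  · -- the rational formula
    have hX0 : ((p:ℚ)^b) ≠ 0 := by
      have h0 : (0:ℚ) < (p:ℚ)^b := pow_pos (by exact_mod_cast hp.pos) b
      linarith only [h0]
    rw [eq_div_iff hX0]
    have hcastP : ((P:ℕ):ℚ) = (p:ℚ)^b := by rw [← hPdef]; push_cast; ring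
    have cq : (q:ℚ) = (p:ℚ)^b * (Q:ℚ) := by
      rw [hq', ← hPdef]
      push_cast
      ring
    have cN : (N:ℚ) = (q:ℚ)*(q:ℚ) + 1 - (q:ℚ) := by
      have h := hN2
      have : ((N:ℕ):ℚ) + (q:ℚ) = (q:ℚ)*(q:ℚ) + 1 := by exact_mod_cast congrArg (Nat.cast : ℕ → ℚ) h
      linarith only [this]
    have cm : (mstar:ℚ) = (q:ℚ)*(Q:ℚ) - 1 := by
      have h := hmstar
      have : ((mstar:ℕ):ℚ) + 1 = (q:ℚ)*(Q:ℚ) := by exact_mod_cast congrArg (Nat.cast : ℕ → ℚ) h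
      linarith only [this]
    have cK : (K:ℚ) = (q:ℚ) + 1 - (p:ℚ)^b := by
      have h := hK
      have : ((K:ℕ):ℚ) + ((P:ℕ):ℚ) = (q:ℚ) + 1 := by exact_mod_cast congrArg (Nat.cast : ℕ → ℚ) h
      rw [hcastP] at this
      linarith only [this]
    have cA : (Astar:ℚ) = (mstar:ℚ)*(K:ℚ) + (N:ℚ) - 2 := by
      have h := hA
      have : ((Astar:ℕ):ℚ) + 2 = (mstar:ℚ)*(K:ℚ) + (N:ℚ) := by
        exact_mod_cast congrArg (Nat.cast : ℕ → ℚ) h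
      linarith only [this]
    have cC : (C:ℚ) = (Astar:ℚ)*(N:ℚ) - (N:ℚ) + 2 := by
      have h := hC
      have : ((C:ℕ):ℚ) + (N:ℚ) = (Astar:ℚ)*(N:ℚ) + 2 := by
        exact_mod_cast congrArg (Nat.cast : ℕ → ℚ) h
      linarith only [this]
    have hp2b : (p:ℚ)^(2*b) = (p:ℚ)^b * (p:ℚ)^b := by
      rw [two_mul, pow_add]
    rw [cC, cA, cm, cK, cN, cq, hp2b]
    ring
end
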